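/- Let n ≥ 1, let m(x,y) = x^p y^q ∈ 𝒪_n be an ordered monomial, and let σ ∈ B_n be its signed index permutation. Then the sequence (q_{|σ(i)|} − f_i(σ))_{i=1}^{n} is a weakly decreasing sequence of non-negative even integers. -/

import Mathlib

open MvPolynomial

/-- The hyperoctahedral group `Bₙ`, realized as the subgroup of permutations of `ℤ`
that commute with negation and fix every integer of absolute value greater than `n`.
Such a permutation restricts to a bijection `σ` of `{-n,…,-1,1,…,n}` with
`σ(-k) = -σ(k)`, and every such bijection arises from a unique element. -/
def HOct (n : ℕ) : Subgroup (Equiv.Perm ℤ) where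
  carrier := {σ | (∀ k : ℤ, σ (-k) = -(σ k)) ∧ ∀ k : ℤ, (n : ℤ) < |k| → σ k = k}
  one_mem' := by
    refine ⟨fun k => rfl, fun k _ => rfl⟩
  mul_mem' := by
    rintro σ τ ⟨hσ1, hσ2⟩ ⟨hτ1, hτ2⟩
    refine ⟨fun k => ?_, fun k hk => ?_⟩
    · simp [Equiv.Perm.mul_apply, hτ1, hσ1]
    · simp [Equiv.Perm.mul_apply, hτ2 k hk, hσ2 k hk]
  inv_mem' := by
    rintro σ ⟨h1, h2⟩
    refine ⟨fun k => ?_, fun k hk => ?_⟩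
    · apply σ.injective
      rw [h1]
      simp
    · have h := h2 k hk
      nth_rewrite 1 [← h]
      simp

/-- The descent set `Des(σ) = {1 ≤ i ≤ n-1 : σ(i) > σ(i+1)}`. -/
def DesB (n : ℕ) (σ : Equiv.Perm ℤ) : Finset ℕ :=
  (Finset.Ico 1 n).filter fun i => σ ((i : ℤ) + 1) < σ (i : ℤ)

/-- `d_i(σ) = #{j ∈ Des(σ) : j ≥ i}`. -/
def dB (n : ℕ) (σ : Equiv.Perm ℤ) (i : ℕ) : ℕ :=
  ((DesB n σ).filter fun j => i ≤ j).card

/-- `ε_i(σ)`: `1` if `σ(i) < 0`, `0` otherwise. -/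
def epsB (σ : Equiv.Perm ℤ) (i : ℕ) : ℕ := if σ (i : ℤ) < 0 then 1 else 0

/-- `f_i(σ) = 2 d_i(σ) + ε_i(σ)`. -/
def fB (n : ℕ) (σ : Equiv.Perm ℤ) (i : ℕ) : ℕ := 2 * dB n σ i + epsB σ i

/-- The sign `σ(k)/|σ(k)|` as a rational number. -/
def sgnQ (σ : Equiv.Perm ℤ) (k : ℤ) : ℚ := if σ k < 0 then -1 else 1

/-- For `i : Fin n` (representing the index `i+1 ∈ {1,…,n}`), the element of `Fin n`
representing `|σ(i+1)| ∈ {1,…,n}`. -/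
def sIdx {n : ℕ} (σ : Equiv.Perm ℤ) (i : Fin n) : Fin n :=
  ⟨((σ ((i : ℕ) + 1 : ℤ)).natAbs - 1) % n, Nat.mod_lt _ i.pos⟩

/-- The diagonal action of a signed permutation on `ℚ[x₁,…,xₙ,y₁,…,yₙ]`:
`x_k ↦ (σ(k)/|σ(k)|)·x_{|σ(k)|}` and `y_k ↦ (σ(k)/|σ(k)|)·y_{|σ(k)|}`.
Here `Sum.inl i` is the variable `x_{i+1}` and `Sum.inr i` is `y_{i+1}`. -/
noncomputable def actXY (n : ℕ) (σ : Equiv.Perm ℤ) :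
    MvPolynomial (Fin n ⊕ Fin n) ℚ →ₐ[ℚ] MvPolynomial (Fin n ⊕ Fin n) ℚ :=
  aeval (Sum.elim
    (fun i => C (sgnQ σ ((i : ℕ) + 1 : ℤ)) * X (Sum.inl (sIdx σ i)))
    (fun i => C (sgnQ σ ((i : ℕ) + 1 : ℤ)) * X (Sum.inr (sIdx σ i))))

/-- Action of a signed permutation on the `x`-variables only. -/
noncomputable def actX (n : ℕ) (σ : Equiv.Perm ℤ) :
    MvPolynomial (Fin n ⊕ Fin n) ℚ →ₐ[ℚ] MvPolynomial (Fin n ⊕ Fin n) ℚ :=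
  aeval (Sum.elim
    (fun i => C (sgnQ σ ((i : ℕ) + 1 : ℤ)) * X (Sum.inl (sIdx σ i)))
    (fun i => X (Sum.inr i)))

/-- Action of a signed permutation on the `y`-variables only. -/
noncomputable def actY (n : ℕ) (σ : Equiv.Perm ℤ) :
    MvPolynomial (Fin n ⊕ Fin n) ℚ →ₐ[ℚ] MvPolynomial (Fin n ⊕ Fin n) ℚ :=
  aeval (Sum.elim
    (fun i => X (Sum.inl i))
    (fun i => C (sgnQ σ ((i : ℕ) + 1 : ℤ)) * X (Sum.inr (sIdx σ i))))

/-- The averaging operator `ρ(f) = (1/|Bₙ|) ∑_{σ ∈ Bₙ} σ·f`. -/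
noncomputable def rho (n : ℕ) (f : MvPolynomial (Fin n ⊕ Fin n) ℚ) :
    MvPolynomial (Fin n ⊕ Fin n) ℚ :=
  (Nat.card ↥(HOct n) : ℚ)⁻¹ • ∑ᶠ σ : ↥(HOct n), actXY n (σ : Equiv.Perm ℤ) f

/-- The diagonal signed descent monomial
`c_σ = ∏_{i=1}^n x_i^{f_i(σ⁻¹)} y_i^{f_{|σ⁻¹(i)|}(σ)}`. -/
noncomputable def cMon (n : ℕ) (σ : Equiv.Perm ℤ) : MvPolynomial (Fin n ⊕ Fin n) ℚ :=
  ∏ i : Fin n,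
    (X (Sum.inl i) ^ fB n σ⁻¹ ((i : ℕ) + 1) *
      X (Sum.inr i) ^ fB n σ ((σ⁻¹ ((i : ℕ) + 1 : ℤ)).natAbs))

/-- The monomial `x^p y^q`. -/
noncomputable def monXY (n : ℕ) (p q : Fin n → ℕ) : MvPolynomial (Fin n ⊕ Fin n) ℚ :=
  (∏ i : Fin n, X (Sum.inl i) ^ p i) * ∏ i : Fin n, X (Sum.inr i) ^ q i

/-- The monomial `x^p y^q` is ordered (belongs to `𝒪ₙ`). -/
def OrderedMon (n : ℕ) (p q : Fin n → ℕ) : Prop :=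
  (∀ k, Even (p k + q k)) ∧ Antitone p ∧
  (∀ (i : Fin n) (h : (i : ℕ) + 1 < n),
    p i = p ⟨(i : ℕ) + 1, h⟩ → Even (p i) → q ⟨(i : ℕ) + 1, h⟩ ≤ q i) ∧
  (∀ (i : Fin n) (h : (i : ℕ) + 1 < n),
    p i = p ⟨(i : ℕ) + 1, h⟩ → Odd (p i) → q i ≤ q ⟨(i : ℕ) + 1, h⟩)

/-- `σ` is the signed index permutation of a monomial with `y`-exponent sequence `q`:
(1) `q_{|σ(1)|} ≥ ⋯ ≥ q_{|σ(n)|}`; (2) ties `q_{|σ(i)|} = q_{|σ(j)|}` (`i < j`) force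
`σ(i) < σ(i+1) < ⋯ < σ(j)`; (3) `q_{|σ(i)|}` is even iff `σ(i) > 0`. -/
def IsSignedIndexPerm (n : ℕ) (q : Fin n → ℕ) (σ : Equiv.Perm ℤ) : Prop :=
  σ ∈ HOct n ∧
  Antitone (fun i : Fin n => q (sIdx σ i)) ∧
  (∀ i j : Fin n, i < j → q (sIdx σ i) = q (sIdx σ j) →
    ∀ k l : Fin n, i ≤ k → k < l → l ≤ j →
      σ ((k : ℕ) + 1 : ℤ) < σ ((l : ℕ) + 1 : ℤ)) ∧
  (∀ i : Fin n, Even (q (sIdx σ i)) ↔ 0 < σ ((i : ℕ) + 1 : ℤ))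

/-- `𝔰(q) = q` if `q` is even, `-q` if `q` is odd. -/
def sFun (q : ℕ) : ℤ := if Even q then (q : ℤ) else -(q : ℤ)

/-- The decreasing rearrangement `𝔬(q)` of a sequence `q`. -/
def oArr {n : ℕ} (q : Fin n → ℕ) : Fin n → ℕ := fun i => q (Tuple.sort q i.rev)

/-- Strict lexicographic comparison of sequences. -/
def LexLT {n : ℕ} {α : Type*} [LT α] (a b : Fin n → α) : Prop :=
  ∃ i, (∀ j, j < i → a j = b j) ∧ a i < b i

/-- The monomial `x^{p'} y^{q'}` strictly precedes `x^p y^q` in the total order `≼` on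
ordered monomials: either `𝔬(x^{p'}y^{q'}) <_ℓ 𝔬(x^p y^q)` lexicographically, or the
`𝔬`-data agree and `(p', 𝔰(q')) <_ℓ (p, 𝔰(q))` lexicographically. -/
def MonPrec {n : ℕ} (p' q' p q : Fin n → ℕ) : Prop :=
  LexLT (oArr p') (oArr p) ∨
  (oArr p' = oArr p ∧ LexLT (oArr q') (oArr q)) ∨
  (oArr p' = oArr p ∧ oArr q' = oArr q ∧
    (LexLT p' p ∨ (p' = p ∧ LexLT (fun i => sFun (q' i)) (fun i => sFun (q i)))))

/-- The monomial symmetric polynomial `m_{2ν}(x) = ∑_{[α] ∈ Σₙ/Σₙ(ν)} x^{2α(ν)}`,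
i.e. the sum of all distinct monomials `x^{2w}` with `w` a rearrangement of `ν`. -/
noncomputable def mSymX (n : ℕ) (ν : Fin n → ℕ) : MvPolynomial (Fin n ⊕ Fin n) ℚ :=
  ∑ w ∈ Finset.image (fun α : Equiv.Perm (Fin n) => ν ∘ α) Finset.univ,
    ∏ i : Fin n, X (Sum.inl i) ^ (2 * w i)

/-- The monomial symmetric polynomial `m_{2μ}(y)`. -/
noncomputable def mSymY (n : ℕ) (μ : Fin n → ℕ) : MvPolynomial (Fin n ⊕ Fin n) ℚ :=
  ∑ w ∈ Finset.image (fun α : Equiv.Perm (Fin n) => μ ∘ α) Finset.univ,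
    ∏ i : Fin n, X (Sum.inr i) ^ (2 * w i)

/-- The action of a signed permutation on `ℚ[x₁,…,xₙ]`:
`x_k ↦ (σ(k)/|σ(k)|)·x_{|σ(k)|}`. Here the variable `i : Fin n` is `x_{i+1}`. -/
noncomputable def actB (n : ℕ) (σ : Equiv.Perm ℤ) :
    MvPolynomial (Fin n) ℚ →ₐ[ℚ] MvPolynomial (Fin n) ℚ :=
  aeval fun i => C (sgnQ σ ((i : ℕ) + 1 : ℤ)) * X (sIdx σ i)

/-- The signed descent monomial `b_σ = ∏_{i=1}^n x_i^{f_{|σ⁻¹(i)|}(σ)}`. -/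
noncomputable def bMon (n : ℕ) (σ : Equiv.Perm ℤ) : MvPolynomial (Fin n) ℚ :=
  ∏ i : Fin n, X i ^ fB n σ ((σ⁻¹ ((i : ℕ) + 1 : ℤ)).natAbs)

/-- For an ordered monomial `x^p y^q ∈ 𝒪ₙ` with signed index permutation `σ`, the
sequence `(q_{|σ(i)|} - f_i(σ))_{i=1}^n` is a weakly decreasing sequence of
non-negative even integers. -/
theorem q_sub_f_decreasing (n : ℕ) (hn : 1 ≤ n) (p q : Fin n → ℕ)
    (hO : OrderedMon n p q) (σ : Equiv.Perm ℤ) (hσ : IsSignedIndexPerm n q σ) :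
    (∀ i : Fin n, 0 ≤ (q (sIdx σ i) : ℤ) - (fB n σ ((i : ℕ) + 1) : ℤ)) ∧
    (∀ i : Fin n, Even ((q (sIdx σ i) : ℤ) - (fB n σ ((i : ℕ) + 1) : ℤ))) ∧
    Antitone (fun i : Fin n => (q (sIdx σ i) : ℤ) - (fB n σ ((i : ℕ) + 1) : ℤ)) := by
  classical
  obtain ⟨m, rfl⟩ : ∃ m, n = m + 1 := ⟨n - 1, by omega⟩
  obtain ⟨hmem, hanti, hties, hpar⟩ := hσ
  obtain ⟨hneg, -⟩ := hmem
  -- σ fixes 0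
  have hσ0 : σ 0 = 0 := by
    have h := hneg 0
    simp only [neg_zero] at h
    omega
  have hne0 : ∀ a : ℕ, 1 ≤ a → σ (a : ℤ) ≠ 0 := by
    intro a ha h
    have := σ.injective (h.trans hσ0.symm)
    omega
  -- parity: ε_i = q_{|σ(i)|} % 2
  have heps : ∀ i : Fin (m + 1), epsB σ ((i : ℕ) + 1) = q (sIdx σ i) % 2 := by
    intro i
    have h4 := hpar i
    have h0 := hne0 ((i : ℕ) + 1) (by omega)
    rw [Nat.even_iff] at h4
    simp only [epsB, Nat.cast_add, Nat.cast_one] at *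
    split_ifs with hlt
    · omega
    · omega
  -- descent step for dB
  have hdstep : ∀ a : ℕ,
      dB (m + 1) σ a = dB (m + 1) σ (a + 1) + (if a ∈ DesB (m + 1) σ then 1 else 0) := by
    intro a
    unfold dB
    have hsplit : (DesB (m + 1) σ).filter (fun j => a ≤ j)
        = (DesB (m + 1) σ).filter (fun j => a + 1 ≤ j) ∪
          (DesB (m + 1) σ).filter (fun j => j = a) := by
      rw [← Finset.filter_or]
      apply Finset.filter_congr
      intro j _
      constructor
      · intro h; omega
      · intro h; omega
    rw [hsplit, Finset.card_union_of_disjoint]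
    · congr 1
      rw [Finset.filter_eq']
      split_ifs <;> simp
    · rw [Finset.disjoint_left]
      intro x hx hx'
      simp only [Finset.mem_filter] at hx hx'
      omega
  have hdn : dB (m + 1) σ (m + 1) = 0 := by
    unfold dB
    rw [Finset.card_eq_zero, Finset.filter_eq_empty_iff]
    intro j hj
    simp only [DesB, Finset.mem_filter, Finset.mem_Ico] at hj
    omega
  -- membership in DesB for a+1 with a+1 ≤ m
  have hmemdes : ∀ a : ℕ, a + 1 < m + 1 →
      ((a + 1) ∈ DesB (m + 1) σ ↔ σ ((a : ℤ) + 1 + 1) < σ ((a : ℤ) + 1)) := by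
    intro a ha
    simp only [DesB, Finset.mem_filter, Finset.mem_Ico, Nat.cast_add, Nat.cast_one]
    constructor
    · rintro ⟨-, h⟩; exact h
    · intro h; exact ⟨⟨by omega, by omega⟩, h⟩
  -- the key step inequality
  have key : ∀ i : Fin m,
      (q (sIdx σ i.succ) : ℤ) - (fB (m + 1) σ (((i.succ : ℕ)) + 1) : ℤ) ≤
      (q (sIdx σ i.castSucc) : ℤ) - (fB (m + 1) σ (((i.castSucc : ℕ)) + 1) : ℤ) := by
    intro i
    have hlt : i.castSucc < i.succ := Fin.castSucc_lt_succ
    have hq : q (sIdx σ i.succ) ≤ q (sIdx σ i.castSucc) := hanti hlt.le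
    have h1 := heps i.castSucc
    have h2 := heps i.succ
    rw [Fin.coe_castSucc] at h1
    rw [Fin.val_succ] at h2
    have hd := hdstep ((i : ℕ) + 1)
    have hdes := hmemdes (i : ℕ) (by omega)
    simp only [fB, Fin.coe_castSucc, Fin.val_succ]
    by_cases hD : σ (((i : ℕ) : ℤ) + 1 + 1) < σ (((i : ℕ) : ℤ) + 1)
    · -- descent case
      rw [if_pos (hdes.mpr hD)] at hd
      -- q values differ
      have hQne : q (sIdx σ i.castSucc) ≠ q (sIdx σ i.succ) := by
        intro heq
        have := hties i.castSucc i.succ hlt heq i.castSucc i.succ le_rfl hlt le_rfl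
        rw [Fin.coe_castSucc, Fin.val_succ] at this
        push_cast at this
        omega
      -- ε monotone along descent
      have hεij : epsB σ ((i : ℕ) + 1) = 1 → epsB σ ((i : ℕ) + 1 + 1) = 1 := by
        intro hε
        simp only [epsB, Nat.cast_add, Nat.cast_one] at hε ⊢
        split_ifs at hε ⊢ <;> omega
      have hb1 : epsB σ ((i : ℕ) + 1) ≤ 1 := by
        simp only [epsB]; split_ifs <;> omega
      have hb2 : epsB σ ((i : ℕ) + 1 + 1) ≤ 1 := by
        simp only [epsB]; split_ifs <;> omega
      omega
    · -- no descent
      rw [if_neg (fun h => hD (hdes.mp h))] at hd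
      have hb1 : epsB σ ((i : ℕ) + 1) ≤ 1 := by
        simp only [epsB]; split_ifs <;> omega
      have hb2 : epsB σ ((i : ℕ) + 1 + 1) ≤ 1 := by
        simp only [epsB]; split_ifs <;> omega
      omega
  have hA : Antitone
      (fun i : Fin (m + 1) => (q (sIdx σ i) : ℤ) - (fB (m + 1) σ ((i : ℕ) + 1) : ℤ)) := by
    rw [Fin.antitone_iff_succ_le]
    intro i
    exact key i
  refine ⟨?_, ?_, hA⟩
  · -- nonnegativity
    intro i
    have hle : i ≤ (⟨m, by omega⟩ : Fin (m + 1)) := by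
      rw [Fin.le_def]
      exact Nat.lt_succ_iff.mp i.isLt
    have h := hA hle
    have hlast : (0 : ℤ) ≤
        (q (sIdx σ (⟨m, by omega⟩ : Fin (m + 1))) : ℤ) -
        (fB (m + 1) σ (((⟨m, by omega⟩ : Fin (m + 1)) : ℕ) + 1) : ℤ) := by
      have he := heps (⟨m, by omega⟩ : Fin (m + 1))
      simp only [fB] at *
      rw [hdn] at *
      omega
    exact le_trans hlast h
  · -- evenness
    intro i
    have he := heps i
    rw [Int.even_iff]
    simp only [fB] at he ⊢
    push_cast
    omega
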